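/- Let y* = 2, let z₀ ∈ [0,1), and let (ρ, ω) be an inner LP-type solution on (z₀, 1] (so in particular ρ(1) = ω(1) = 1/2, ρ'(1) = −1/2, ω'(1) = 0, and 1 − 4z²ω(z)² > 0 on (z₀,1)). Then ω(z) > 1/2 for all z ∈ (z₀, 1). -/

import Mathlib

/-- The rescaled self-similar isothermal Euler–Poisson system with parameter `y = y*`,
at the point `z`. -/
def EPSys (y : ℝ) (ρ ω : ℝ → ℝ) (z : ℝ) : Prop :=
  deriv ρ z =
    -(2 * y ^ 2 * z * ω z * ρ z * (ρ z - ω z)) / (1 - y ^ 2 * z ^ 2 * (ω z) ^ 2) ∧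
  deriv ω z =
    (1 - 3 * ω z) / z +
      2 * y ^ 2 * z * (ω z) ^ 2 * (ρ z - ω z) / (1 - y ^ 2 * z ^ 2 * (ω z) ^ 2)

/-- The multiplied form of the system, valid also at the sonic point. -/
def MultSys (y : ℝ) (ρ ω : ℝ → ℝ) (z : ℝ) : Prop :=
  deriv ρ z * (1 - y ^ 2 * z ^ 2 * (ω z) ^ 2)
    + 2 * y ^ 2 * z * ω z * ρ z * (ρ z - ω z) = 0 ∧
  z * deriv ω z * (1 - y ^ 2 * z ^ 2 * (ω z) ^ 2)
    - (1 - 3 * ω z) * (1 - y ^ 2 * z ^ 2 * (ω z) ^ 2)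
    - 2 * y ^ 2 * z ^ 2 * (ω z) ^ 2 * (ρ z - ω z) = 0

/-- An inner LP-type solution on `(z₀, 1]`: continuous on `(z₀,1]`, real analytic on a
left-neighbourhood of `z = 1` where it solves the multiplied system with the LP
conditions, differentiable on `(z₀,1)` where it solves the system, and subsonic there. -/
def InnerLPSol (y z₀ : ℝ) (ρ ω : ℝ → ℝ) : Prop :=
  ContinuousOn ρ (Set.Ioc z₀ 1) ∧ ContinuousOn ω (Set.Ioc z₀ 1) ∧
  (∃ r : ℝ, 0 < r ∧ r < 1 ∧
    AnalyticOnNhd ℝ ρ (Set.Ioc (1 - r) 1) ∧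
    AnalyticOnNhd ℝ ω (Set.Ioc (1 - r) 1) ∧
    (∀ z ∈ Set.Ioc (1 - r) 1, MultSys y ρ ω z)) ∧
  ρ 1 = 1 / y ∧ ω 1 = 1 / y ∧ deriv ρ 1 = -(1 / y) ∧ deriv ω 1 = 1 - 2 / y ∧
  (∀ z ∈ Set.Ioo z₀ 1,
    DifferentiableAt ℝ ρ z ∧ DifferentiableAt ℝ ω z ∧ EPSys y ρ ω z) ∧
  (∀ z ∈ Set.Ioo z₀ 1, 0 < 1 - y ^ 2 * z ^ 2 * (ω z) ^ 2)

open Set Filter Topology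

/-- one-sided sign of derivative from one-sided monotone comparison -/
lemma deriv_nonneg_of_right {f : ℝ → ℝ} {c d : ℝ} (hf : HasDerivAt f d c)
    (hev : ∀ᶠ t in 𝓝[>] c, f c ≤ f t) : 0 ≤ d := by
  have hs : Tendsto (slope f c) (𝓝[>] c) (𝓝 d) :=
    (hasDerivAt_iff_tendsto_slope.1 hf).mono_left
      (nhdsWithin_mono c (fun t ht => ne_of_gt ht))
  refine ge_of_tendsto hs ?_
  filter_upwards [hev, self_mem_nhdsWithin] with t ht ht'
  have h1 : (0:ℝ) < t - c := by simpa [sub_pos] using ht'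
  simp only [slope_def_field]
  rw [div_nonneg_iff]
  exact Or.inl ⟨by linarith, le_of_lt h1⟩

lemma deriv_nonpos_of_right {f : ℝ → ℝ} {c d : ℝ} (hf : HasDerivAt f d c)
    (hev : ∀ᶠ t in 𝓝[>] c, f t ≤ f c) : d ≤ 0 := by
  have h := deriv_nonneg_of_right hf.neg (by filter_upwards [hev] with t ht; simpa using ht)
  linarith

/-- If `f 1 = 0` and `f' 1 = d < 0` then `f > 0` shortly to the left of 1. -/
lemma eventually_pos_left {f : ℝ → ℝ} {d : ℝ} (hf : HasDerivAt f d 1) (hd : d < 0)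
    (h0 : f 1 = 0) : ∀ᶠ z in 𝓝[<] (1:ℝ), 0 < f z := by
  have hs : Tendsto (slope f 1) (𝓝[<] (1:ℝ)) (𝓝 d) :=
    (hasDerivAt_iff_tendsto_slope.1 hf).mono_left
      (nhdsWithin_mono 1 (fun t ht => ne_of_lt ht))
  have hev : ∀ᶠ z in 𝓝[<] (1:ℝ), slope f 1 z < 0 :=
    hs.eventually (eventually_lt_nhds hd)
  filter_upwards [hev, self_mem_nhdsWithin] with z hz hz'
  have h1 : z - 1 < 0 := by simpa [sub_neg] using hz'
  rw [slope_def_field, div_neg_iff] at hz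
  rcases hz with ⟨hp, hn⟩ | ⟨hn, hp⟩
  · linarith
  · rw [h0] at hn; linarith

lemma eventually_neg_left {f : ℝ → ℝ} {d : ℝ} (hf : HasDerivAt f d 1) (hd : 0 < d)
    (h0 : f 1 = 0) : ∀ᶠ z in 𝓝[<] (1:ℝ), f z < 0 := by
  have h := eventually_pos_left hf.neg (by linarith) (by simpa using h0)
  filter_upwards [h] with z hz; simpa using hz

lemma analyticAt_deriv' {f : ℝ → ℝ} {x : ℝ} (h : AnalyticAt ℝ f x) :
    AnalyticAt ℝ (deriv f) x := by
  have : AnalyticOnNhd ℝ f {x} := fun y hy => by rw [Set.mem_singleton_iff] at hy; rwa [hy]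
  exact this.deriv x rfl

lemma deriv_zero_on_Ioc {f : ℝ → ℝ} {a : ℝ}
    (hf : AnalyticOnNhd ℝ f (Set.Ioc a 1)) (h0 : ∀ z ∈ Set.Ioc a 1, f z = 0) :
    ∀ z ∈ Set.Ioc a 1, deriv f z = 0 := by
  intro z hz
  have hmem : Set.Ioc a z ∈ 𝓝[Set.Iic z] z := by
    have h1 : Set.Ioo a (z+1) ∈ 𝓝 z := Ioo_mem_nhds hz.1 (by linarith)
    have h2 := inter_mem_nhdsWithin (Set.Iic z) h1
    have heq : Set.Iic z ∩ Set.Ioo a (z+1) = Set.Ioc a z := by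
      ext t; constructor
      · rintro ⟨ht1, ht2⟩; exact ⟨ht2.1, ht1⟩
      · rintro ⟨ht1, ht2⟩; exact ⟨ht2, ht1, by linarith⟩
    rwa [heq] at h2
  have hd : HasDerivWithinAt f (deriv f z) (Set.Iic z) z :=
    ((hf z hz).differentiableAt.hasDerivAt).hasDerivWithinAt
  have hd0 : HasDerivWithinAt f 0 (Set.Iic z) z := by
    have hc : HasDerivWithinAt (fun _ : ℝ => (0:ℝ)) 0 (Set.Iic z) z :=
      (hasDerivAt_const z (0:ℝ)).hasDerivWithinAt
    refine hc.congr_of_eventuallyEq ?_ (h0 z hz)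
    filter_upwards [hmem] with t ht using h0 t ⟨ht.1, le_trans ht.2 hz.2⟩
  have h1 := hd.derivWithin (uniqueDiffOn_Iic z z (by simp))
  have h2 := hd0.derivWithin (uniqueDiffOn_Iic z z (by simp))
  rw [← h1, h2]

variable {ρ ω : ℝ → ℝ} {r : ℝ}

lemma second_derivs (hr0 : 0 < r)
    (hρa : AnalyticOnNhd ℝ ρ (Set.Ioc (1-r) 1)) (hωa : AnalyticOnNhd ℝ ω (Set.Ioc (1-r) 1))
    (hms : ∀ z ∈ Set.Ioc (1-r) 1, MultSys 2 ρ ω z)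
    (hρ1 : ρ 1 = 1/2) (hω1 : ω 1 = 1/2)
    (hρ'1 : deriv ρ 1 = -(1/2)) (hω'1 : deriv ω 1 = 0) :
    deriv (deriv ρ) 1 = 1/2 ∧ deriv (deriv ω) 1 = 1/2 := by
  have hI1 : (1:ℝ) ∈ Set.Ioc (1-r) 1 := ⟨by linarith, le_refl 1⟩
  set F₁ : ℝ → ℝ := fun t => deriv ρ t * (1 - 4*(t^2*(ω t)^2)) + 8*(t*(ω t*(ρ t*(ρ t - ω t)))) with hF₁
  set F₂ : ℝ → ℝ := fun t => (t*deriv ω t)*(1 - 4*(t^2*(ω t)^2))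
      - (1-3*ω t)*(1 - 4*(t^2*(ω t)^2)) - 8*(t^2*((ω t)^2*(ρ t - ω t))) with hF₂
  set G₁ : ℝ → ℝ := fun t =>
      deriv (deriv ρ) t * (1 - 4*(t^2*(ω t)^2))
        + deriv ρ t * -(4*(2*t*(ω t)^2 + t^2*(2*ω t*deriv ω t)))
        + 8*(1*(ω t*(ρ t*(ρ t - ω t)))
            + t*(deriv ω t*(ρ t*(ρ t - ω t))
                + ω t*(deriv ρ t*(ρ t - ω t) + ρ t*(deriv ρ t - deriv ω t)))) with hG₁
  set G₂ : ℝ → ℝ := fun t =>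
      (1*deriv ω t + t*deriv (deriv ω) t) * (1 - 4*(t^2*(ω t)^2))
        + (t*deriv ω t) * -(4*(2*t*(ω t)^2 + t^2*(2*ω t*deriv ω t)))
      - (-(3*deriv ω t)*(1 - 4*(t^2*(ω t)^2))
          + (1-3*ω t) * -(4*(2*t*(ω t)^2 + t^2*(2*ω t*deriv ω t))))
      - 8*(2*t*((ω t)^2*(ρ t - ω t))
          + t^2*((2*ω t*deriv ω t)*(ρ t - ω t) + (ω t)^2*(deriv ρ t - deriv ω t))) with hG₂
  have hF₁0 : ∀ z ∈ Set.Ioc (1-r) 1, F₁ z = 0 := by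
    intro z hz; have h := (hms z hz).1; rw [hF₁]; linear_combination h
  have hF₂0 : ∀ z ∈ Set.Ioc (1-r) 1, F₂ z = 0 := by
    intro z hz; have h := (hms z hz).2; rw [hF₂]; linear_combination h
  have hF₁a : AnalyticOnNhd ℝ F₁ (Set.Ioc (1-r) 1) := by
    intro z hz
    have h1 := hρa z hz; have h2 := hωa z hz
    exact ((analyticAt_deriv' h1).mul (analyticAt_const.sub
        (analyticAt_const.mul ((analyticAt_id.pow 2).mul (h2.pow 2))))).add
      (analyticAt_const.mul (analyticAt_id.mul (h2.mul (h1.mul (h1.sub h2)))))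
  have hF₂a : AnalyticOnNhd ℝ F₂ (Set.Ioc (1-r) 1) := by
    intro z hz
    have h1 := hρa z hz; have h2 := hωa z hz
    have hD : AnalyticAt ℝ (fun t : ℝ => 1 - 4*(t^2*(ω t)^2)) z :=
      analyticAt_const.sub (analyticAt_const.mul ((analyticAt_id.pow 2).mul (h2.pow 2)))
    exact (((analyticAt_id.mul (analyticAt_deriv' h2)).mul hD).sub
        ((analyticAt_const.sub (analyticAt_const.mul h2)).mul hD)).sub
      (analyticAt_const.mul ((analyticAt_id.pow 2).mul ((h2.pow 2).mul (h1.sub h2))))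
  have hd11 : ∀ z ∈ Set.Ioc (1-r) 1, deriv F₁ z = 0 := deriv_zero_on_Ioc hF₁a hF₁0
  have hd12 : deriv (deriv F₁) 1 = 0 := deriv_zero_on_Ioc hF₁a.deriv hd11 1 hI1
  have hd21 : ∀ z ∈ Set.Ioc (1-r) 1, deriv F₂ z = 0 := deriv_zero_on_Ioc hF₂a hF₂0
  have hd22 : deriv (deriv F₂) 1 = 0 := deriv_zero_on_Ioc hF₂a.deriv hd21 1 hI1
  -- level 1 : deriv F₁ = G₁, deriv F₂ = G₂ near 1
  have hkey : ∀ z : ℝ, AnalyticAt ℝ ρ z → AnalyticAt ℝ ω z →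
      HasDerivAt F₁ (G₁ z) z ∧ HasDerivAt F₂ (G₂ z) z := by
    intro z hρz hωz
    have hρ' := hρz.differentiableAt.hasDerivAt
    have hω' := hωz.differentiableAt.hasDerivAt
    have hρ'' := (analyticAt_deriv' hρz).differentiableAt.hasDerivAt
    have hω'' := (analyticAt_deriv' hωz).differentiableAt.hasDerivAt
    have hid : HasDerivAt (fun t : ℝ => t) 1 z := hasDerivAt_id z
    have ht2 : HasDerivAt (fun t : ℝ => t^2) (2*z) z := by simpa using hasDerivAt_pow 2 z
    have hω2 : HasDerivAt (fun t => (ω t)^2) (2*ω z*deriv ω z) z := by simpa using hω'.fun_pow 2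
    have hD : HasDerivAt (fun t => 1 - 4*(t^2*(ω t)^2))
        (-(4*(2*z*(ω z)^2 + z^2*(2*ω z*deriv ω z)))) z := ((ht2.mul hω2).const_mul 4).const_sub 1
    have hsub : HasDerivAt (fun t => ρ t - ω t) (deriv ρ z - deriv ω z) z := hρ'.sub hω'
    have hC : HasDerivAt (fun t => ρ t*(ρ t - ω t))
        (deriv ρ z*(ρ z - ω z) + ρ z*(deriv ρ z - deriv ω z)) z := hρ'.mul hsub
    constructor
    · exact (hρ''.mul hD).add ((hid.mul (hω'.mul hC)).const_mul 8)
    · exact (((hid.mul hω'').mul hD).sub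
        (((hω'.const_mul 3).const_sub 1).mul hD)).sub
        ((ht2.mul (hω2.mul hsub)).const_mul 8)
  have hevρ := (hρa 1 hI1).eventually_analyticAt
  have hevω := (hωa 1 hI1).eventually_analyticAt
  have hev₁ : deriv F₁ =ᶠ[𝓝 1] G₁ := by
    filter_upwards [hevρ, hevω] with z h1 h2 using ((hkey z h1 h2).1).deriv
  have hev₂ : deriv F₂ =ᶠ[𝓝 1] G₂ := by
    filter_upwards [hevρ, hevω] with z h1 h2 using ((hkey z h1 h2).2).deriv
  -- level 2 : differentiate G₁, G₂ at 1
  have hρz := hρa 1 hI1; have hωz := hωa 1 hI1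
  have hρ' := hρz.differentiableAt.hasDerivAt
  have hω' := hωz.differentiableAt.hasDerivAt
  have hρ'' := (analyticAt_deriv' hρz).differentiableAt.hasDerivAt
  have hω'' := (analyticAt_deriv' hωz).differentiableAt.hasDerivAt
  have hρ''' := (analyticAt_deriv' (analyticAt_deriv' hρz)).differentiableAt.hasDerivAt
  have hω''' := (analyticAt_deriv' (analyticAt_deriv' hωz)).differentiableAt.hasDerivAt
  have hid : HasDerivAt (fun t : ℝ => t) 1 (1:ℝ) := hasDerivAt_id 1
  have ht2 : HasDerivAt (fun t : ℝ => t^2) (2*(1:ℝ)) 1 := by simpa using hasDerivAt_pow 2 (1:ℝ)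
  have hω2 : HasDerivAt (fun t => (ω t)^2) (2*ω 1*deriv ω 1) 1 := by simpa using hω'.fun_pow 2
  have hD : HasDerivAt (fun t => 1 - 4*(t^2*(ω t)^2))
      (-(4*(2*1*(ω 1)^2 + 1^2*(2*ω 1*deriv ω 1)))) 1 := by
    exact ((ht2.mul hω2).const_mul (4:ℝ)).const_sub 1
  have hsub : HasDerivAt (fun t => ρ t - ω t) (deriv ρ 1 - deriv ω 1) 1 := hρ'.sub hω'
  have hC : HasDerivAt (fun t => ρ t*(ρ t - ω t))
      (deriv ρ 1*(ρ 1 - ω 1) + ρ 1*(deriv ρ 1 - deriv ω 1)) 1 := hρ'.mul hsub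
  -- inner function of the bracket -(4*(2*t*(ω t)^2 + t^2*(2*ω t*deriv ω t)))
  have hX := ((((hid.const_mul (2:ℝ)).mul hω2).add
      (ht2.mul ((hω'.const_mul (2:ℝ)).mul hω''))).const_mul (4:ℝ)).neg
  have hG₁d := ((hρ'''.mul hD).add ((hρ''.mul hX))).add
      ((((hω'.mul hC).const_mul 1).add
        (hid.mul ((hω''.mul hC).add
          (hω'.mul ((hρ''.mul hsub).add (hρ'.mul (hρ''.sub hω''))))))).const_mul 8)
  -- G₂ level 2
  have hG₂d := (((((hω''.const_mul 1).add (hid.mul hω''')).mul hD).add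
        ((hid.mul hω'').mul hX)).sub
      ((((hω''.const_mul 3).neg).mul hD).add
        (((hω'.const_mul 3).const_sub 1).mul hX))).sub
      ((((hid.const_mul 2).mul (hω2.mul hsub)).add
        (ht2.mul ((((hω'.const_mul 2).mul hω'').mul hsub).add
          (hω2.mul (hρ''.sub hω''))))).const_mul 8)
  have e1 : deriv G₁ 1 = 0 := by rw [← hev₁.deriv_eq]; exact hd12
  have e2 : deriv G₂ 1 = 0 := by rw [← hev₂.deriv_eq]; exact hd22
  have e1' : deriv G₁ 1 = _ := hG₁d.deriv
  have e2' : deriv G₂ 1 = _ := hG₂d.deriv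
  rw [e1] at e1'
  rw [e2] at e2'
  simp only [Pi.mul_apply, Pi.add_apply, Pi.sub_apply, Pi.neg_apply] at e1' e2'
  rw [hρ1, hω1, hρ'1, hω'1] at e1' e2'
  ring_nf at e1' e2'
  constructor <;> linarith [e1', e2']

set_option maxHeartbeats 2000000 in
/-- For `y* = 2`, the relative velocity of the inner LP-type solution stays above `1/2`. -/
theorem omega_above_half_for_ystar_two
    (z₀ : ℝ) (hz₀ : z₀ ∈ Set.Ico (0 : ℝ) 1)
    (ρ ω : ℝ → ℝ) (h : InnerLPSol 2 z₀ ρ ω) :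
    ∀ z ∈ Set.Ioo z₀ 1, 1 / 2 < ω z := by
  obtain ⟨hρc, hωc, ⟨r, hr0, hr1, hρa, hωa, hms⟩, hρ1, hω1, hρ'1, hω'1, hsys, hpos⟩ := h
  norm_num at hρ1 hω1 hρ'1 hω'1
  -- second derivatives at the sonic point
  obtain ⟨hp2, hw2⟩ := second_derivs hr0 hρa hωa hms hρ1 hω1 hρ'1 hω'1
  have hI1 : (1:ℝ) ∈ Set.Ioc (1-r) 1 := ⟨by linarith, le_refl 1⟩
  have anρ := hρa 1 hI1
  have anω := hωa 1 hI1
  -- Part A: ω > 1/2 and z·ρ < 1/2 just to the left of 1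
  have hDω : HasDerivAt (deriv ω) (1/2 : ℝ) 1 := by
    have h0 := (analyticAt_deriv' anω).differentiableAt.hasDerivAt
    rwa [hw2] at h0
  have evω : ∀ᶠ z in 𝓝[<] (1:ℝ), deriv ω z < 0 :=
    eventually_neg_left hDω (by norm_num) hω'1
  -- the function q t = t * ρ t
  have hevan : ∀ᶠ z in 𝓝 (1:ℝ), AnalyticAt ℝ ρ z ∧ AnalyticAt ℝ ω z :=
    anρ.eventually_analyticAt.and anω.eventually_analyticAt
  have hqd : ∀ z : ℝ, AnalyticAt ℝ ρ z →
      HasDerivAt (fun t => t * ρ t) (1 * ρ z + z * deriv ρ z) z := by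
    intro z hz
    have hid : HasDerivAt (fun t : ℝ => t) 1 z := hasDerivAt_id z
    exact hid.mul hz.differentiableAt.hasDerivAt
  have hqev : deriv (fun t => t * ρ t) =ᶠ[𝓝 (1:ℝ)] fun z => 1 * ρ z + z * deriv ρ z := by
    filter_upwards [hevan] with z hz using (hqd z hz.1).deriv
  have hq1 : deriv (fun t => t * ρ t) 1 = 0 := by
    rw [hqev.eq_of_nhds, hρ1, hρ'1]; norm_num
  have hDq : HasDerivAt (deriv (fun t => t * ρ t)) (-(1/2) : ℝ) 1 := by
    have hid : HasDerivAt (fun t : ℝ => t) 1 (1:ℝ) := hasDerivAt_id 1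
    have hb := (anρ.differentiableAt.hasDerivAt.const_mul (1:ℝ)).add
      (hid.mul (analyticAt_deriv' anρ).differentiableAt.hasDerivAt)
    have hval : 1 * deriv ρ 1 + (1 * deriv ρ 1 + 1 * deriv (deriv ρ) 1) = -(1/2 : ℝ) := by
      rw [hρ'1, hp2]; norm_num
    rw [← hval]
    exact hb.congr_of_eventuallyEq hqev
  have evq : ∀ᶠ z in 𝓝[<] (1:ℝ), 0 < deriv (fun t => t * ρ t) z :=
    eventually_pos_left hDq (by norm_num) hq1
  -- extract an interval (l, 1)
  have evall : ∀ᶠ z in 𝓝[<] (1:ℝ),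
      deriv ω z < 0 ∧ 0 < deriv (fun t => t * ρ t) z ∧
      AnalyticAt ℝ ρ z ∧ AnalyticAt ℝ ω z := by
    filter_upwards [evω, evq, hevan.filter_mono nhdsWithin_le_nhds] with z h1 h2 h3
    exact ⟨h1, h2, h3.1, h3.2⟩
  obtain ⟨l, hl, hIoo⟩ := mem_nhdsLT_iff_exists_Ioo_subset.1 evall
  rw [Set.mem_Iio] at hl
  -- Good region to the left of 1
  have hgoodIoo : ∀ z ∈ Set.Ioo l 1, 1/2 < ω z ∧ z * ρ z < 1/2 := by
    intro z hz
    have hcont : ∀ f : ℝ → ℝ, (∀ t ∈ Set.Icc z 1, AnalyticAt ℝ f t) →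
        ContinuousOn f (Set.Icc z 1) ∧ DifferentiableOn ℝ f (Set.Ioo z 1) := by
      intro f hf
      constructor
      · exact fun t ht => (hf t ht).continuousAt.continuousWithinAt
      · exact fun t ht => ((hf t ⟨le_of_lt ht.1, le_of_lt ht.2⟩).differentiableAt).differentiableWithinAt
    have hω_icc : ∀ t ∈ Set.Icc z 1, AnalyticAt ℝ ω t := by
      intro t ht
      rcases eq_or_lt_of_le ht.2 with h1 | h1
      · rw [h1]; exact anω
      · exact (hIoo ⟨lt_of_lt_of_le hz.1 ht.1, h1⟩).2.2.2
    have hρ_icc : ∀ t ∈ Set.Icc z 1, AnalyticAt ℝ ρ t := by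
      intro t ht
      rcases eq_or_lt_of_le ht.2 with h1 | h1
      · rw [h1]; exact anρ
      · exact (hIoo ⟨lt_of_lt_of_le hz.1 ht.1, h1⟩).2.2.1
    constructor
    · obtain ⟨hc, hd⟩ := hcont ω hω_icc
      obtain ⟨ξ, hξ, hslope⟩ := exists_deriv_eq_slope ω hz.2 hc hd
      have hneg : deriv ω ξ < 0 := (hIoo ⟨lt_trans hz.1 hξ.1, hξ.2⟩).1
      rw [hslope] at hneg
      rw [div_neg_iff] at hneg
      rcases hneg with ⟨_, hh⟩ | ⟨hh, _⟩
      · linarith [hz.2]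
      · rw [hω1] at hh; linarith
    · have hq_icc : ∀ t ∈ Set.Icc z 1, AnalyticAt ℝ (fun t => t * ρ t) t := by
        intro t ht; exact analyticAt_id.mul (hρ_icc t ht)
      obtain ⟨hc, hd⟩ := hcont _ hq_icc
      obtain ⟨ξ, hξ, hslope⟩ := exists_deriv_eq_slope (fun t => t * ρ t) hz.2 hc hd
      have hposd : 0 < deriv (fun t => t * ρ t) ξ := (hIoo ⟨lt_trans hz.1 hξ.1, hξ.2⟩).2.1
      rw [hslope] at hposd
      rw [div_pos_iff] at hposd
      rcases hposd with ⟨hh, _⟩ | ⟨_, hh⟩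
      · simp only [one_mul] at hh; rw [hρ1] at hh; linarith
      · linarith [hz.2]
  -- Part B : propagate the invariant region to all of (z₀, 1)
  have claim : ∀ z ∈ Set.Ioo z₀ 1, 1/2 < ω z ∧ z * ρ z < 1/2 := by
    by_contra hcon
    push_neg at hcon
    obtain ⟨w, hw, hbadw⟩ := hcon
    set S : Set ℝ := {t : ℝ | w ≤ t ∧ t < 1 ∧ ∀ s, t < s → s < 1 → 1/2 < ω s ∧ s * ρ s < 1/2}
      with hS
    have ht₀S : max l w ∈ S := by
      refine ⟨le_max_right _ _, max_lt hl hw.2, fun s hs hs1 => ?_⟩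
      exact hgoodIoo s ⟨lt_of_le_of_lt (le_max_left _ _) hs, hs1⟩
    have hbdd : BddBelow S := ⟨w, fun t ht => ht.1⟩
    set c := sInf S with hc
    have hcw : w ≤ c := le_csInf ⟨_, ht₀S⟩ (fun t ht => ht.1)
    have hct₀ : c ≤ max l w := csInf_le hbdd ht₀S
    have hc1 : c < 1 := lt_of_le_of_lt hct₀ (max_lt hl hw.2)
    have hcz₀ : z₀ < c := lt_of_lt_of_le hw.1 hcw
    have hc0 : 0 < c := lt_of_le_of_lt hz₀.1 hcz₀
    have hgood : ∀ s, c < s → s < 1 → 1/2 < ω s ∧ s * ρ s < 1/2 := by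
      intro s hs hs1
      obtain ⟨t, htS, hts⟩ := exists_lt_of_csInf_lt ⟨_, ht₀S⟩ hs
      exact htS.2.2 s hts hs1
    have hcmem : c ∈ Set.Ioo z₀ 1 := ⟨hcz₀, hc1⟩
    obtain ⟨hdρc, hdωc, hepsc⟩ := hsys c hcmem
    have hDc := hpos c hcmem
    have hIoo_mem : Set.Ioo c 1 ∈ 𝓝[>] c := Ioo_mem_nhdsGT_of_mem ⟨le_refl c, hc1⟩
    -- closure of the invariants at c
    have hω_ge : 1/2 ≤ ω c := by
      have ht : Tendsto ω (𝓝[>] c) (𝓝 (ω c)) :=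
        hdωc.continuousAt.continuousWithinAt.tendsto
      refine ge_of_tendsto ht ?_
      filter_upwards [hIoo_mem] with s hs using le_of_lt (hgood s hs.1 hs.2).1
    have hq_le : c * ρ c ≤ 1/2 := by
      have hcq : ContinuousAt (fun t => t * ρ t) c := continuousAt_id.mul hdρc.continuousAt
      have ht : Tendsto (fun t => t * ρ t) (𝓝[>] c) (𝓝 (c * ρ c)) :=
        hcq.continuousWithinAt.tendsto
      refine le_of_tendsto ht ?_
      filter_upwards [hIoo_mem] with s hs using le_of_lt (hgood s hs.1 hs.2).2
    rcases eq_or_lt_of_le hω_ge with hωeq | hωgt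
    · -- case E1 : ω c = 1/2 : then ω' (c) < 0, contradicting minimality from the right
      have hslope : 0 ≤ deriv ω c := by
        refine deriv_nonneg_of_right hdωc.hasDerivAt ?_
        filter_upwards [hIoo_mem] with t ht
        have := (hgood t ht.1 ht.2).1
        rw [← hωeq]; linarith
      have hXeq := hepsc.2
      rw [← hωeq] at hXeq
      have hd2 : 1 - 2^2*c^2*((1:ℝ)/2)^2 = 1 - c^2 := by ring
      rw [hd2] at hXeq
      have hden : (0:ℝ) < 1 - c^2 := by nlinarith
      have hXeq2 : deriv ω c * (c * (1 - c^2)) =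
          (1 - 3*(1/2)) * (1 - c^2) + 2*2^2*c^2*((1:ℝ)/2)^2*(ρ c - 1/2) := by
        rw [hXeq]; field_simp
      nlinarith [mul_nonneg hslope (mul_pos hc0 hden).le, sq_nonneg (1-c),
        mul_le_of_le_one_left (le_of_lt hc0) (le_of_lt hc1)]
    rcases eq_or_lt_of_le hq_le with hqeq | hqlt
    · -- case E2 : c * ρ c = 1/2 : then (zρ)'(c) > -..., contradiction
      have hqderiv : HasDerivAt (fun t => t * ρ t) (1 * ρ c + c * deriv ρ c) c := by
        have hid : HasDerivAt (fun t : ℝ => t) 1 c := hasDerivAt_id c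
        exact hid.mul hdρc.hasDerivAt
      have hslope : 1 * ρ c + c * deriv ρ c ≤ 0 := by
        refine deriv_nonpos_of_right hqderiv ?_
        filter_upwards [hIoo_mem] with t ht
        have := (hgood t ht.1 ht.2).2
        rw [hqeq]; linarith
      have hD2 : (0:ℝ) < (1 - 2*c*ω c) * (1 + 2*c*ω c) := by nlinarith [hDc]
      have h1p : (0:ℝ) < 1 + 2*c*ω c := by nlinarith
      have h2cW : 0 < 1 - 2*c*ω c := by
        rcases mul_pos_iff.1 hD2 with ⟨h1, _⟩ | ⟨_, h2⟩
        · exact h1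
        · linarith
      have hPD : deriv ρ c * (1 - 2^2*c^2*(ω c)^2) =
          -(2*2^2*c*ω c*ρ c*(ρ c - ω c)) := by
        rw [hepsc.1]; field_simp
      -- combine
      have h9 : (1 * ρ c + c * deriv ρ c) * (1 - 2^2*c^2*(ω c)^2) ≤ 0 :=
        mul_nonpos_of_nonpos_of_nonneg hslope (le_of_lt hDc)
      have h10 : c * ((1 * ρ c + c * deriv ρ c) * (1 - 2^2*c^2*(ω c)^2)) ≤ 0 :=
        mul_nonpos_of_nonneg_of_nonpos (le_of_lt hc0) h9
      have h11 : c^2 * (deriv ρ c * (1 - 2^2*c^2*(ω c)^2)) =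
          c^2 * (-(2*2^2*c*ω c*ρ c*(ρ c - ω c))) := by rw [hPD]
      have h12 : c*ρ c*(1 - 2^2*c^2*(ω c)^2)
          - 2*2^2*c^3*ω c*ρ c*(ρ c - ω c) ≤ 0 := by nlinarith [h10, h11]
      have m2 : c^3*ρ c*(ω c)^2 = c^2*(ω c)^2*(1/2) := by
        rw [show c^3*ρ c*(ω c)^2 = c^2*(ω c)^2*(c*ρ c) from by ring, hqeq]
      have m3 : c^3*(ω c)*ρ c^2 = (ω c)*c*(1/4) := by
        rw [show c^3*(ω c)*ρ c^2 = (ω c)*c*((c*ρ c)^2) from by ring, hqeq]; norm_num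
      nlinarith [h12, m2, m3, mul_pos h2cW h2cW, hqeq]
    · -- both strict : contradiction with minimality of c
      rcases eq_or_lt_of_le hcw with hweq | hwlt
      · rw [hweq] at hbadw
        exact absurd (hbadw hωgt) (not_le.2 hqlt)
      · have e1 : ∀ᶠ t in 𝓝 c, 1/2 < ω t :=
          hdωc.continuousAt.eventually (eventually_gt_nhds hωgt)
        have e2 : ∀ᶠ t in 𝓝 c, t * ρ t < 1/2 :=
          (continuousAt_id.mul hdρc.continuousAt).eventually (eventually_lt_nhds hqlt)
        obtain ⟨ε, hε, hball⟩ := Metric.eventually_nhds_iff.1 (e1.and e2)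
        have ht'S : max w (c - ε/2) ∈ S := by
          refine ⟨le_max_left _ _, ?_, fun s hs hs1 => ?_⟩
          · apply max_lt hw.2; linarith
          · rcases lt_or_ge c s with hcs | hsc
            · exact hgood s hcs hs1
            · have hs2 : c - ε/2 < s := lt_of_le_of_lt (le_max_right _ _) hs
              have : dist s c < ε := by
                rw [Real.dist_eq, abs_lt]; constructor <;> linarith
              exact hball this
        have : c ≤ max w (c - ε/2) := csInf_le hbdd ht'S
        have : max w (c - ε/2) < c := by
          apply max_lt hwlt; linarith
        linarith
  exact fun z hz => by
    have := (claim z hz).1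
    linarith
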